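/- Let s be a primitive string of length n ≥ 2 over Σ, let π be a local ordering family (of order 1), and let x1, x2 ∈ Σ. The map that sends a cyclic rotation w of s to its right cyclic shift (its last symbol moved to the front) restricts to a bijection from the set of rotations of s whose first symbol is x2 and whose last symbol is x1 onto the set of rotations of s having x1x2 as a prefix, and this bijection is order preserving with respect to ≺: if w ≺ w' then shift(w) ≺ shift(w'). -/

import Mathlib

/-- The cyclic rotation of `s` by `r`: `s[r+1..n] s[1..r]`. -/
def rot {α : Type*} (s : List α) (r : ℕ) : List α := s.drop r ++ s.take r

/-- A string is primitive if its cyclic rotations are pairwise distinct. -/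
def IsPrimitive {α : Type*} (s : List α) : Prop :=
  ∀ r₁ r₂ : ℕ, r₁ < s.length → r₂ < s.length → rot s r₁ = rot s r₂ → r₁ = r₂

/-- The context adaptive order induced by a family `π` of linear orders on the
alphabet, one for each string (context): `u ≺ v` iff, `x = u[1..k] = v[1..k]`
being the longest common prefix of `u` and `v`, the symbol `u[k+1]` is
`π x`-smaller than `v[k+1]`. -/
def caLt {α : Type*} (π : List α → LinearOrder α) (u v : List α) : Prop :=
  ∃ (k : ℕ) (hu : k < u.length) (hv : k < v.length),
    u.take k = v.take k ∧ (π (u.take k)).lt (u.get ⟨k, hu⟩) (v.get ⟨k, hv⟩)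

/-- `π` is a local ordering family (of order 1): the order `π x` depends only on
the last symbol of `x` (for nonempty `x`). -/
def IsLocalOrdering {α : Type*} (π : List α → LinearOrder α) : Prop :=
  ∀ x y : List α, x ≠ [] → y ≠ [] → x.getLast? = y.getLast? →
    ∀ a b : α, (π x).lt a b ↔ (π y).lt a b

/-- The right cyclic shift of `w`: its last symbol moved to the front. -/
def rshift {α : Type*} (w : List α) : List α := rot w (w.length - 1)

lemma rot_length {α : Type*} (s : List α) (r : ℕ) : (rot s r).length = s.length := by
  simp [rot]; omega

lemma rot_eq_rotate {α : Type*} (s : List α) (r : ℕ) (h : r ≤ s.length) :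
    rot s r = s.rotate r := (List.rotate_eq_drop_append_take h).symm

lemma rshift_append_singleton {α : Type*} (l : List α) (x : α) :
    rshift (l ++ [x]) = x :: l := by
  have h : (l ++ [x]).length - 1 = l.length := by simp
  simp only [rshift, rot, h, List.drop_left, List.take_left]
  rfl

lemma lo_lt_irrefl {α : Type*} (L : LinearOrder α) (a : α) : ¬ L.lt a a := by
  letI := L; exact lt_irrefl a

/-- For a local ordering family (of order 1) and any `x₁ x₂ ∈ Σ`, the right
cyclic shift restricts to a bijection from the rotations of `s` starting with
`x₂` and ending with `x₁` onto the rotations of `s` having `x₁x₂` as a prefix,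
and this bijection is order preserving w.r.t. the induced order `≺`. -/
theorem rshift_bijection_order_preserving {α : Type*} [Fintype α] [Nonempty α] [DecidableEq α]
    (π : List α → LinearOrder α) (hloc : IsLocalOrdering π)
    (s : List α) (hn : 2 ≤ s.length) (hp : IsPrimitive s) (x1 x2 : α) :
    (∀ w : List α,
      ((∃ r : Fin s.length, w = rot s (r : ℕ)) ∧
        w.head? = some x2 ∧ w.getLast? = some x1) →
      ((∃ r : Fin s.length, rshift w = rot s (r : ℕ)) ∧ [x1, x2] <+: rshift w)) ∧
    (∀ w w' : List α,
      ((∃ r : Fin s.length, w = rot s (r : ℕ)) ∧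
        w.head? = some x2 ∧ w.getLast? = some x1) →
      ((∃ r : Fin s.length, w' = rot s (r : ℕ)) ∧
        w'.head? = some x2 ∧ w'.getLast? = some x1) →
      rshift w = rshift w' → w = w') ∧
    (∀ v : List α,
      ((∃ r : Fin s.length, v = rot s (r : ℕ)) ∧ [x1, x2] <+: v) →
      ∃ w : List α,
        ((∃ r : Fin s.length, w = rot s (r : ℕ)) ∧
          w.head? = some x2 ∧ w.getLast? = some x1) ∧ rshift w = v) ∧
    (∀ w w' : List α,
      ((∃ r : Fin s.length, w = rot s (r : ℕ)) ∧
        w.head? = some x2 ∧ w.getLast? = some x1) →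
      ((∃ r : Fin s.length, w' = rot s (r : ℕ)) ∧
        w'.head? = some x2 ∧ w'.getLast? = some x1) →
      caLt π w w' → caLt π (rshift w) (rshift w')) := by
  have hn0 : 0 < s.length := by omega
  -- any string in the domain has the shape (x2 :: m) ++ [x1] with |m| = n-2
  have key : ∀ w : List α, w.length = s.length →
      w.head? = some x2 → w.getLast? = some x1 →
      ∃ m : List α, w = (x2 :: m) ++ [x1] ∧ m.length = s.length - 2 := by
    intro w hlen hh hl
    obtain ⟨a, tw, rfl⟩ : ∃ a t, w = a :: t := by
      cases w with
      | nil => simp at hh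
      | cons a t => exact ⟨a, t, rfl⟩
    have ha : a = x2 := by simpa using hh
    obtain ⟨b, tb, rfl⟩ : ∃ b t, tw = b :: t := by
      cases tw with
      | nil => simp at hlen; omega
      | cons b t => exact ⟨b, t, rfl⟩
    rw [List.getLast?_cons_cons] at hl
    have hne : (b :: tb) ≠ [] := by simp
    have hlast : (b :: tb).getLast hne = x1 := by
      rw [List.getLast?_eq_getLast hne, Option.some_inj] at hl; exact hl
    refine ⟨(b :: tb).dropLast, ?_, ?_⟩
    · rw [ha]
      have h2 := List.dropLast_append_getLast hne
      rw [hlast] at h2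
      conv_lhs => rw [← h2]
      simp
    · simp only [List.length_dropLast]
      simp at hlen ⊢
      omega
  -- rshift of a rotation is a rotation
  have hrotshift : ∀ (w : List α), (∃ r : Fin s.length, w = rot s (r : ℕ)) →
      ∃ r' : Fin s.length, rshift w = rot s (r' : ℕ) := by
    rintro w ⟨r, hw⟩
    have hlen : w.length = s.length := by rw [hw, rot_length]
    refine ⟨⟨((r : ℕ) + (s.length - 1)) % s.length, Nat.mod_lt _ hn0⟩, ?_⟩
    have h1 : rshift w = w.rotate (w.length - 1) :=
      rot_eq_rotate w _ (Nat.sub_le _ _)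
    rw [h1, hlen, hw, rot_eq_rotate s _ (le_of_lt r.2), List.rotate_rotate,
      rot_eq_rotate s _ (le_of_lt (Nat.mod_lt _ hn0)), List.rotate_mod]
  refine ⟨?_, ?_, ?_, ?_⟩
  -- Part 1
  · rintro w ⟨hr, hh, hl⟩
    obtain ⟨r, hw⟩ := hr
    have hlen : w.length = s.length := by rw [hw, rot_length]
    obtain ⟨m, hm, -⟩ := key w hlen hh hl
    refine ⟨hrotshift w ⟨r, hw⟩, ?_⟩
    rw [hm, rshift_append_singleton]
    exact ⟨m, rfl⟩
  -- Part 2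
  · rintro w w' ⟨⟨r, hw⟩, hh, hl⟩ ⟨⟨r', hw'⟩, hh', hl'⟩ heq
    have hlen : w.length = s.length := by rw [hw, rot_length]
    have hlen' : w'.length = s.length := by rw [hw', rot_length]
    obtain ⟨m, hm, -⟩ := key w hlen hh hl
    obtain ⟨m', hm', -⟩ := key w' hlen' hh' hl'
    rw [hm, hm', rshift_append_singleton, rshift_append_singleton] at heq
    rw [hm, hm']
    simp only [List.cons.injEq] at heq
    rw [heq.2.2]
  -- Part 3
  · rintro v ⟨⟨r, hv⟩, hpre⟩
    obtain ⟨t, ht⟩ := hpre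
    -- v = x1 :: x2 :: t
    have hvform : v = (x1 :: x2 :: t) := by rw [← ht]; rfl
    refine ⟨(x2 :: t) ++ [x1], ⟨?_, by simp, List.getLast?_concat⟩, ?_⟩
    · refine ⟨⟨((r : ℕ) + 1) % s.length, Nat.mod_lt _ hn0⟩, ?_⟩
      have h1 : (x2 :: t) ++ [x1] = v.rotate 1 := by
        rw [hvform, List.rotate_cons_succ, List.rotate_zero]
      rw [h1, hv, rot_eq_rotate s _ (le_of_lt r.2), List.rotate_rotate,
        rot_eq_rotate s _ (le_of_lt (Nat.mod_lt _ hn0)), List.rotate_mod]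
    · rw [rshift_append_singleton, hvform]
  -- Part 4
  · rintro w w' ⟨⟨r, hw⟩, hh, hl⟩ ⟨⟨r', hw'⟩, hh', hl'⟩ ⟨k, hku, hkv, htake, hlt⟩
    have hlen : w.length = s.length := by rw [hw, rot_length]
    have hlen' : w'.length = s.length := by rw [hw', rot_length]
    obtain ⟨m, hm, hml⟩ := key w hlen hh hl
    obtain ⟨m', hm', hml'⟩ := key w' hlen' hh' hl'
    subst hm hm'
    set u : List α := x2 :: m with hu
    set u' : List α := x2 :: m' with hu'
    have hul : u.length = s.length - 1 := by simp [hu]; omega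
    have hul' : u'.length = s.length - 1 := by simp [hu']; omega
    -- k ≥ 1
    have hk1 : 1 ≤ k := by
      rcases Nat.eq_zero_or_pos k with h0 | h; swap; · exact h
      exfalso
      subst h0
      have e1 : (u ++ [x1]).get ⟨0, hku⟩ = x2 := by simp [hu]
      have e2 : (u' ++ [x1]).get ⟨0, hkv⟩ = x2 := by simp [hu']
      rw [e1, e2] at hlt
      exact lo_lt_irrefl _ _ hlt
    -- k ≠ n - 1
    have hkn : k ≠ s.length - 1 := by
      intro hk
      have e1 : (u ++ [x1]).get ⟨k, hku⟩ = x1 := by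
        simp only [List.get_eq_getElem]
        have : k = u.length := by omega
        subst this
        exact List.getElem_concat_length (a := x1) rfl _
      have e2 : (u' ++ [x1]).get ⟨k, hkv⟩ = x1 := by
        simp only [List.get_eq_getElem]
        have : k = u'.length := by omega
        subst this
        exact List.getElem_concat_length (a := x1) rfl _
      rw [e1, e2] at hlt
      exact lo_lt_irrefl _ _ hlt
    have hkb : k < s.length - 1 := by
      have : k < (u ++ [x1]).length := hku
      simp [hul] at this
      omega
    have hku' : k < u.length := by omega
    have hkv' : k < u'.length := by omega
    -- gets of w, w' at k are gets of u, u'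
    have gw : (u ++ [x1]).get ⟨k, hku⟩ = u.get ⟨k, hku'⟩ := by
      simp only [List.get_eq_getElem]
      exact List.getElem_append_left hku'
    have gw' : (u' ++ [x1]).get ⟨k, hkv⟩ = u'.get ⟨k, hkv'⟩ := by
      simp only [List.get_eq_getElem]
      exact List.getElem_append_left hkv'
    have tw : (u ++ [x1]).take k = u.take k := List.take_append_of_le_length (by omega)
    have tw' : (u' ++ [x1]).take k = u'.take k := List.take_append_of_le_length (by omega)
    rw [gw, gw', tw] at hlt
    rw [tw, tw'] at htake
    -- now build the witness
    have hrs : rshift (u ++ [x1]) = x1 :: u := rshift_append_singleton u x1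
    have hrs' : rshift (u' ++ [x1]) = x1 :: u' := rshift_append_singleton u' x1
    rw [hrs, hrs']
    have hku2 : k + 1 < (x1 :: u).length := by simp [hul]; omega
    have hkv2 : k + 1 < (x1 :: u').length := by simp [hul']; omega
    refine ⟨k + 1, hku2, hkv2, ?_, ?_⟩
    · simp only [List.take_succ_cons, htake]
    · have g1 : (x1 :: u).get ⟨k + 1, hku2⟩ = u.get ⟨k, hku'⟩ := rfl
      have g2 : (x1 :: u').get ⟨k + 1, hkv2⟩ = u'.get ⟨k, hkv'⟩ := rfl
      rw [g1, g2]
      have hctx : ((x1 :: u).take (k + 1)) = x1 :: u.take k := by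
        simp [List.take_succ_cons]
      rw [hctx]
      -- transfer via locality
      obtain ⟨j, rfl⟩ : ∃ j, k = j + 1 := ⟨k - 1, by omega⟩
      have hloceq := hloc (x1 :: u.take (j + 1)) (u.take (j + 1))
        (by simp) (by simp [hu]) ?_ (u.get ⟨j+1, hku'⟩) (u'.get ⟨j+1, hkv'⟩)
      · exact hloceq.mpr hlt
      · show (x1 :: u.take (j + 1)).getLast? = (u.take (j + 1)).getLast?
        have : u.take (j + 1) = x2 :: m.take j := by simp [hu]
        rw [this]
        exact List.getLast?_cons_cons
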